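/- Lifting concrete to abstract executions: Let γ_0 = γ_init^n, m_1, γ_1, …, m_ℓ, γ_ℓ be a concrete execution of a round-based register protocol. Then there exists an abstract execution σ_init →* σ such that the set of non-blank registers of γ_ℓ equals the written-register set W(σ), and for every i ∈ {0,…,ℓ}, the support of the location multiset of γ_i is contained in the location set S(σ). -/

import Mathlib

open scoped Classical

/-- Actions of a round-based register protocol: round increment, read of value `x`
from register `α` of round `k - i`, and write of value `x` to register `α` of the
current round. -/
inductive Act (dim : ℕ) (D : Type) where
  | incr : Act dim D
  | read (i : ℕ) (α : Fin dim) (x : D) : Act dim D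
  | write (α : Fin dim) (x : D) : Act dim D

/-- A round-based register protocol. -/
structure Protocol (Q D : Type) (dim : ℕ) where
  q0 : Q
  d0 : D
  v : ℕ
  T : Set (Q × Act dim D × Q)
  read_le : ∀ q i α x q', (q, Act.read i α x, q') ∈ T → i ≤ v
  write_ne : ∀ q α x q', (q, Act.write α x, q') ∈ T → x ≠ d0

/-- A move: a transition together with the round on which it is performed. -/
abbrev Move (Q D : Type) (dim : ℕ) := (Q × Act dim D × Q) × ℕ

/-- A concrete configuration: a finitely supported multiset of locations and a
valuation of all registers. -/
structure Conc (Q D : Type) (dim : ℕ) where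
  loc : (Q × ℕ) →₀ ℕ
  reg : ℕ → Fin dim → D

variable {Q D : Type} {dim : ℕ}

/-- Value read from register `α` of round `k - i` (registers of negative rounds
hold the initial value). -/
def regVal (P : Protocol Q D dim) (γ : Conc Q D dim) (k i : ℕ) (α : Fin dim) : D :=
  if i ≤ k then γ.reg (k - i) α else P.d0

/-- Updating register `α` of round `k` to value `x`. -/
def updReg (r : ℕ → Fin dim → D) (k : ℕ) (α : Fin dim) (x : D) : ℕ → Fin dim → D :=
  fun k' α' => if k' = k ∧ α' = α then x else r k' α'

/-- Concrete step relation of a round-based register protocol. -/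
inductive ConcStep [DecidableEq Q] (P : Protocol Q D dim) :
    Conc Q D dim → Move Q D dim → Conc Q D dim → Prop where
  | incr {q q' : Q} {k : ℕ} {γ γ' : Conc Q D dim} :
      (q, Act.incr, q') ∈ P.T → 0 < γ.loc (q, k) →
      γ'.loc = γ.loc - Finsupp.single (q, k) 1 + Finsupp.single (q', k + 1) 1 →
      γ'.reg = γ.reg →
      ConcStep P γ ((q, Act.incr, q'), k) γ'
  | read {q q' : Q} {k i : ℕ} {α : Fin dim} {x : D} {γ γ' : Conc Q D dim} :
      (q, Act.read i α x, q') ∈ P.T → 0 < γ.loc (q, k) →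
      regVal P γ k i α = x →
      γ'.loc = γ.loc - Finsupp.single (q, k) 1 + Finsupp.single (q', k) 1 →
      γ'.reg = γ.reg →
      ConcStep P γ ((q, Act.read i α x, q'), k) γ'
  | write {q q' : Q} {k : ℕ} {α : Fin dim} {x : D} {γ γ' : Conc Q D dim} :
      (q, Act.write α x, q') ∈ P.T → 0 < γ.loc (q, k) →
      γ'.loc = γ.loc - Finsupp.single (q, k) 1 + Finsupp.single (q', k) 1 →
      γ'.reg = updReg γ.reg k α x →
      ConcStep P γ ((q, Act.write α x, q'), k) γ'

/-- Concrete reachability. -/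
def ConcReach [DecidableEq Q] (P : Protocol Q D dim) : Conc Q D dim → Conc Q D dim → Prop :=
  Relation.ReflTransGen (fun γ γ' => ∃ m, ConcStep P γ m γ')

/-- Initial concrete configuration with `n` processes. -/
noncomputable def Conc.init [DecidableEq Q] (P : Protocol Q D dim) (n : ℕ) : Conc Q D dim :=
  ⟨Finsupp.single (P.q0, 0) n, fun _ _ => P.d0⟩

/-- Number of processes of a concrete configuration. -/
def Conc.size (γ : Conc Q D dim) : ℕ := γ.loc.sum fun _ n => n

/-- Support of the location multiset of a concrete configuration. -/
def Conc.supp (γ : Conc Q D dim) : Set (Q × ℕ) := {l | 0 < γ.loc l}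

/-- The set of non-blank registers of a concrete configuration. -/
def Conc.nonBlank (P : Protocol Q D dim) (γ : Conc Q D dim) : Set (ℕ × Fin dim) :=
  {r | γ.reg r.1 r.2 ≠ P.d0}

/-- An abstract configuration: a set of locations and a set of written registers. -/
structure Abs (Q : Type) (dim : ℕ) where
  S : Set (Q × ℕ)
  W : Set (ℕ × Fin dim)

/-- Abstract step relation. -/
inductive AbsStep (P : Protocol Q D dim) :
    Abs Q dim → Move Q D dim → Abs Q dim → Prop where
  | incr {σ : Abs Q dim} {q q' : Q} {k : ℕ} :
      (q, Act.incr, q') ∈ P.T → (q, k) ∈ σ.S →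
      AbsStep P σ ((q, Act.incr, q'), k) ⟨σ.S ∪ {(q', k + 1)}, σ.W⟩
  | readBlank {σ : Abs Q dim} {q q' : Q} {k i : ℕ} {α : Fin dim} :
      (q, Act.read i α P.d0, q') ∈ P.T → (q, k) ∈ σ.S →
      (i ≤ k → (k - i, α) ∉ σ.W) →
      AbsStep P σ ((q, Act.read i α P.d0, q'), k) ⟨σ.S ∪ {(q', k)}, σ.W⟩
  | readVal {σ : Abs Q dim} {q q' q1 q2 : Q} {k i : ℕ} {α : Fin dim} {x : D} :
      x ≠ P.d0 → (q, Act.read i α x, q') ∈ P.T → (q, k) ∈ σ.S →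
      i ≤ k → (k - i, α) ∈ σ.W →
      (q1, Act.write α x, q2) ∈ P.T → (q1, k - i) ∈ σ.S → (q2, k - i) ∈ σ.S →
      AbsStep P σ ((q, Act.read i α x, q'), k) ⟨σ.S ∪ {(q', k)}, σ.W⟩
  | write {σ : Abs Q dim} {q q' : Q} {k : ℕ} {α : Fin dim} {x : D} :
      (q, Act.write α x, q') ∈ P.T → (q, k) ∈ σ.S →
      AbsStep P σ ((q, Act.write α x, q'), k) ⟨σ.S ∪ {(q', k)}, σ.W ∪ {(k, α)}⟩

/-- Abstract reachability. -/
def AbsReach (P : Protocol Q D dim) : Abs Q dim → Abs Q dim → Prop :=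
  Relation.ReflTransGen (fun σ σ' => ∃ m, AbsStep P σ m σ')

/-- The initial abstract configuration. -/
def Abs.init (P : Protocol Q D dim) : Abs Q dim := ⟨{(P.q0, 0)}, ∅⟩

/-- Abstract execution along a list of moves. -/
inductive AbsRun (P : Protocol Q D dim) : Abs Q dim → List (Move Q D dim) → Abs Q dim → Prop
  | nil (σ : Abs Q dim) : AbsRun P σ [] σ
  | cons {σ σ' σ'' : Abs Q dim} {m : Move Q D dim} {ms : List (Move Q D dim)} :
      AbsStep P σ m σ' → AbsRun P σ' ms σ'' → AbsRun P σ (m :: ms) σ''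

/-- First-write order of a schedule, given a set of already written registers. -/
noncomputable def fwo (W : Set (ℕ × Fin dim)) : List (Move Q D dim) → List (ℕ × Fin dim)
  | [] => []
  | ((_, Act.write α _, _), k) :: ms =>
      if (k, α) ∈ W then fwo W ms else (k, α) :: fwo (W ∪ {(k, α)}) ms
  | _ :: ms => fwo W ms

/-- Projection of a sequence of registers onto those whose round lies in `[k - v, k]`. -/
def winproj (v k : ℕ) (F : List (ℕ × Fin dim)) : List (ℕ × Fin dim) :=
  F.filter (fun r => decide (k - v ≤ r.1 ∧ r.1 ≤ k))

/-- Invariant relating a concrete configuration to an abstract configuration. -/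
def LiftInv (P : Protocol Q D dim) (γ : Conc Q D dim) (σ : Abs Q dim) : Prop :=
  γ.supp ⊆ σ.S ∧ Conc.nonBlank P γ = σ.W ∧
  ∀ (k : ℕ) (α : Fin dim), γ.reg k α ≠ P.d0 →
    ∃ q1 q2, (q1, Act.write α (γ.reg k α), q2) ∈ P.T ∧ (q1, k) ∈ σ.S ∧ (q2, k) ∈ σ.S

lemma supp_sub_add (loc : (Q × ℕ) →₀ ℕ) (l0 l1 l : Q × ℕ)
    (h : 0 < ((loc - Finsupp.single l0 1 + Finsupp.single l1 1 : (Q × ℕ) →₀ ℕ)) l) :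
    0 < loc l ∨ l = l1 := by
  by_cases hl : l = l1
  · exact Or.inr hl
  · left
    rw [Finsupp.add_apply, Finsupp.tsub_apply,
      Finsupp.single_eq_of_ne' (fun e => hl e.symm)] at h
    have := Nat.sub_le (loc l) ((Finsupp.single l0 1) l)
    omega

lemma supp_step {loc loc' : (Q × ℕ) →₀ ℕ} {l0 l1 : Q × ℕ}
    (hloc : loc' = loc - Finsupp.single l0 1 + Finsupp.single l1 1)
    {S : Set (Q × ℕ)} (hS : {l | 0 < loc l} ⊆ S) :
    {l | 0 < loc' l} ⊆ S ∪ {l1} := by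
  intro l hl
  rw [hloc] at hl
  rcases supp_sub_add loc l0 l1 l hl with h | h
  · exact Or.inl (hS h)
  · exact Or.inr h

lemma step_lift [DecidableEq Q] (P : Protocol Q D dim) {γ γ' : Conc Q D dim}
    {mv : Move Q D dim} {σ : Abs Q dim}
    (hs : ConcStep P γ mv γ') (hinv : LiftInv P γ σ) :
    ∃ σ', AbsStep P σ mv σ' ∧ LiftInv P γ' σ' ∧ σ.S ⊆ σ'.S := by
  obtain ⟨hsupp, hW, hwit⟩ := hinv
  cases hs with
  | @incr q q' k _ _ hT hq hloc hreg =>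
      refine ⟨_, AbsStep.incr hT (hsupp hq), ⟨?_, ?_, ?_⟩, Set.subset_union_left⟩
      · exact supp_step hloc hsupp
      · show Conc.nonBlank P γ' = σ.W
        unfold Conc.nonBlank
        rw [hreg]; exact hW
      · intro k' α' hne
        rw [hreg] at hne ⊢
        obtain ⟨q1, q2, h1, h2, h3⟩ := hwit k' α' hne
        exact ⟨q1, q2, h1, Or.inl h2, Or.inl h3⟩
  | @read q q' k i α x _ _ hT hq hval hloc hreg =>
      by_cases hx : x = P.d0
      · subst hx
        refine ⟨_, AbsStep.readBlank hT (hsupp hq) ?_, ⟨?_, ?_, ?_⟩,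
          Set.subset_union_left⟩
        · intro hik hmem
          rw [← hW] at hmem
          unfold regVal at hval
          rw [if_pos hik] at hval
          exact hmem hval
        · exact supp_step hloc hsupp
        · show Conc.nonBlank P γ' = σ.W
          unfold Conc.nonBlank
          rw [hreg]; exact hW
        · intro k' α' hne
          rw [hreg] at hne ⊢
          obtain ⟨q1, q2, h1, h2, h3⟩ := hwit k' α' hne
          exact ⟨q1, q2, h1, Or.inl h2, Or.inl h3⟩
      · have hik : i ≤ k := by
          by_contra hik
          unfold regVal at hval
          rw [if_neg hik] at hval
          exact hx hval.symm
        have hreg2 : γ.reg (k - i) α = x := by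
          unfold regVal at hval; rwa [if_pos hik] at hval
        have hmem : (k - i, α) ∈ σ.W := by
          rw [← hW]; show γ.reg (k - i) α ≠ P.d0; rw [hreg2]; exact hx
        obtain ⟨q1, q2, h1, h2, h3⟩ := hwit (k - i) α (by rw [hreg2]; exact hx)
        rw [hreg2] at h1
        refine ⟨_, AbsStep.readVal hx hT (hsupp hq) hik hmem h1 h2 h3,
          ⟨?_, ?_, ?_⟩, Set.subset_union_left⟩
        · exact supp_step hloc hsupp
        · show Conc.nonBlank P γ' = σ.W
          unfold Conc.nonBlank
          rw [hreg]; exact hW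
        · intro k' α' hne
          rw [hreg] at hne ⊢
          obtain ⟨q1', q2', h1', h2', h3'⟩ := hwit k' α' hne
          exact ⟨q1', q2', h1', Or.inl h2', Or.inl h3'⟩
  | @write q q' k α x _ _ hT hq hloc hreg =>
      have hxne : x ≠ P.d0 := P.write_ne q α x q' hT
      refine ⟨_, AbsStep.write hT (hsupp hq), ⟨?_, ?_, ?_⟩, Set.subset_union_left⟩
      · exact supp_step hloc hsupp
      · ext ⟨a, b⟩
        show γ'.reg a b ≠ P.d0 ↔ (a, b) ∈ σ.W ∪ {(k, α)}
        rw [hreg]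
        unfold updReg
        by_cases hab : a = k ∧ b = α
        · rw [if_pos hab]
          simp only [Set.mem_union, Set.mem_singleton_iff]
          constructor
          · intro _; exact Or.inr (by rw [hab.1, hab.2])
          · intro _; exact hxne
        · rw [if_neg hab]
          simp only [Set.mem_union, Set.mem_singleton_iff]
          constructor
          · intro h
            exact Or.inl (by rw [← hW]; exact h)
          · rintro (h | h)
            · rw [← hW] at h; exact h
            · exact absurd ⟨congrArg Prod.fst h, congrArg Prod.snd h⟩ hab
      · intro k' α' hne
        rw [hreg] at hne ⊢
        unfold updReg at hne ⊢
        by_cases hab : k' = k ∧ α' = α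
        · rw [if_pos hab] at hne ⊢
          refine ⟨q, q', ?_, Or.inl ?_, Or.inr ?_⟩
          · rw [hab.2]; exact hT
          · rw [hab.1]; exact hsupp hq
          · rw [hab.1]; rfl
        · rw [if_neg hab] at hne ⊢
          obtain ⟨q1, q2, h1, h2, h3⟩ := hwit k' α' hne
          exact ⟨q1, q2, h1, Or.inl h2, Or.inl h3⟩

/-- Lifting concrete executions to abstract executions (Lemma A.1). -/
theorem lift_concrete_to_abstract {Q D : Type} {dim : ℕ} [DecidableEq Q]
    (P : Protocol Q D dim) (n ℓ : ℕ)
    (γ : Fin (ℓ + 1) → Conc Q D dim) (m : Fin ℓ → Move Q D dim)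
    (h0 : γ 0 = Conc.init P n)
    (hstep : ∀ i : Fin ℓ, ConcStep P (γ i.castSucc) (m i) (γ i.succ)) :
    ∃ σ : Abs Q dim,
      AbsReach P (Abs.init P) σ ∧
      Conc.nonBlank P (γ (Fin.last ℓ)) = σ.W ∧
      ∀ i : Fin (ℓ + 1), (γ i).supp ⊆ σ.S := by
  have base : LiftInv P (γ 0) (Abs.init P) := by
    rw [h0]
    refine ⟨?_, ?_, ?_⟩
    · intro l hl
      have : 0 < (Finsupp.single (P.q0, 0) n) l := hl
      rw [Finsupp.single_apply] at this
      by_cases h : (P.q0, 0) = l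
      · exact h.symm
      · rw [if_neg h] at this; omega
    · ext r
      simp [Conc.nonBlank, Conc.init, Abs.init]
    · intro k α hne
      exact absurd rfl hne
  have key : ∀ j : Fin (ℓ + 1),
      ∃ σ : Abs Q dim, AbsReach P (Abs.init P) σ ∧ LiftInv P (γ j) σ ∧
        ∀ i : Fin (ℓ + 1), i ≤ j → (γ i).supp ⊆ σ.S := by
    intro j
    induction j using Fin.induction with
    | zero =>
        refine ⟨Abs.init P, Relation.ReflTransGen.refl, base, ?_⟩
        intro i hi
        have : i = 0 := le_antisymm hi (Fin.zero_le i)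
        rw [this]
        exact base.1
    | succ i ih =>
        obtain ⟨σ, hreach, hinv, hall⟩ := ih
        obtain ⟨σ', hstep', hinv', hsub⟩ := step_lift P (hstep i) hinv
        refine ⟨σ', hreach.tail ⟨m i, hstep'⟩, hinv', ?_⟩
        intro i' hi'
        by_cases h : i' = i.succ
        · rw [h]; exact hinv'.1
        · have : i' ≤ i.castSucc := by
            have h1 : i'.val ≤ i.val + 1 := hi'
            have h2 : i'.val ≠ i.val + 1 := fun e => h (Fin.ext e)
            exact Fin.mk_le_mk.mpr (by omega)
          exact fun l hl => hsub (hall i' this hl)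
  obtain ⟨σ, hreach, hinv, hall⟩ := key (Fin.last ℓ)
  exact ⟨σ, hreach, hinv.2.1, fun i => hall i (Fin.le_last i)⟩
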